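/- At a GNE of the peer-to-peer market with no energy waste (Σ_n Q_n = 0), defining r_n by ζ_{0n} r_n = ζ_{n0}, the nodal prices satisfy λ_n = r_n λ_0 + (c_{n0} − r_n c_{0n}) + (ξ_{n0} − r_n ξ_{0n}) for all n ≠ 0, and the root price satisfies λ_0 · Σ_n (1/(2ã_n) + 1/a_n) r_n = Σ_n [D_n* − (1/(2ã_n))(μ̄_n − μ̲_n) + b_n/a_n + (1/a_n)(ν̄_n − ν̲_n) − ΔG_n] − Σ_{n≠0} (1/(2ã_n) + 1/a_n)[(c_{n0} − r_n c_{0n}) + (ξ_{n0} − r_n ξ_{0n})]. -/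

import Mathlib

open Finset

/-- at a GNE of the peer-to-peer market with no energy waste, defining
`r_n` by `ζ_{0n} r_n = ζ_{n0}`, the nodal prices satisfy
`λ_n = r_n λ_0 + (c_{n0} − r_n c_{0n}) + (ξ_{n0} − r_n ξ_{0n})` for `n ≠ 0`, and the
root price satisfies the stated closed-form sum identity. -/
theorem stmt13 {N : Type*} [Fintype N] [DecidableEq N] (root : N)
    (ta a b Dstar ΔG lam Q μl μu νl νu r : N → ℝ) (c ξ ζ : N → N → ℝ)
    (hta : ∀ n, 0 < ta n) (ha : ∀ n, 0 < a n)
    (hstat : ∀ n m, n ≠ m → lam n = ζ n m + c n m + ξ n m)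
    (hr : ∀ n, n ≠ root → ζ root n * r n = ζ n root)
    (hrroot : r root = 1)
    (hQ : ∀ n, Q n = (Dstar n - 1 / (2 * ta n) * (μu n - μl n) + b n / a n
        + 1 / a n * (νu n - νl n)) - (1 / (2 * ta n) + 1 / a n) * lam n - ΔG n)
    (hnowaste : ∑ n, Q n = 0) :
    (∀ n, n ≠ root →
      lam n = r n * lam root + (c n root - r n * c root n)
        + (ξ n root - r n * ξ root n)) ∧
    lam root * ∑ n, (1 / (2 * ta n) + 1 / a n) * r n =
      ∑ n, (Dstar n - 1 / (2 * ta n) * (μu n - μl n) + b n / a n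
          + 1 / a n * (νu n - νl n) - ΔG n)
      - ∑ n ∈ Finset.univ.erase root, (1 / (2 * ta n) + 1 / a n) *
          ((c n root - r n * c root n) + (ξ n root - r n * ξ root n)) := by
  have hlam : ∀ n, n ≠ root →
      lam n = r n * lam root + (c n root - r n * c root n)
        + (ξ n root - r n * ξ root n) := by
    intro n hn
    have h1 := hstat n root hn
    have h2 := hstat root n (Ne.symm hn)
    have h3 := hr n hn
    have : ζ n root = r n * (lam root - c root n - ξ root n) := by
      rw [← h3, h2]; ring
    rw [h1, this]; ring
  refine ⟨hlam, ?_⟩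
  have key : ∑ n, (1 / (2 * ta n) + 1 / a n) * lam n =
      ∑ n, (Dstar n - 1 / (2 * ta n) * (μu n - μl n) + b n / a n
          + 1 / a n * (νu n - νl n) - ΔG n) := by
    have : ∑ n, Q n = ∑ n, ((Dstar n - 1 / (2 * ta n) * (μu n - μl n) + b n / a n
        + 1 / a n * (νu n - νl n) - ΔG n) - (1 / (2 * ta n) + 1 / a n) * lam n) := by
      apply Finset.sum_congr rfl; intro n _; rw [hQ n]; ring
    rw [Finset.sum_sub_distrib] at this
    rw [hnowaste] at this
    linarith [this]
  have hsplit : ∑ n, (1 / (2 * ta n) + 1 / a n) * lam n =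
      lam root * ∑ n, (1 / (2 * ta n) + 1 / a n) * r n
      + ∑ n ∈ Finset.univ.erase root, (1 / (2 * ta n) + 1 / a n) *
          ((c n root - r n * c root n) + (ξ n root - r n * ξ root n)) := by
    rw [Finset.mul_sum,
      ← Finset.sum_erase_add _ _ (Finset.mem_univ root),
      ← Finset.sum_erase_add (f := fun i => lam root * ((1 / (2 * ta i) + 1 / a i) * r i))
        _ (Finset.mem_univ root), hrroot]
    have : ∀ n ∈ Finset.univ.erase root,
        (1 / (2 * ta n) + 1 / a n) * lam n =
        lam root * ((1 / (2 * ta n) + 1 / a n) * r n) +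
          (1 / (2 * ta n) + 1 / a n) *
          ((c n root - r n * c root n) + (ξ n root - r n * ξ root n)) := by
      intro n hn
      rw [hlam n (Finset.mem_erase.mp hn).1]; ring
    rw [Finset.sum_congr rfl this, Finset.sum_add_distrib]
    ring
  rw [hsplit] at key
  linarith
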